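/- Proposition: There exists a constant d ∈ ℕ and a partial computable function F such that for all binary strings x and y with C(y) < C(C(x)|x) − d, F(x, C(x), y) is defined and equals C(y). In other words, the pair (x, C(x)) uniformly computes the Kolmogorov complexity of every string y whose complexity is below C(C(x)|x) − d. -/

import Mathlib

/-- Conditional plain Kolmogorov complexity of `x` given `y`, with respect to the
machine `U` (which takes a pair (conditional input, program)). -/
noncomputable def condC (U : List Bool × List Bool →. List Bool) (x y : List Bool) : ℕ :=
  sInf {k : ℕ | ∃ p : List Bool, p.length = k ∧ x ∈ U (y, p)}

/-- Plain (unconditional) Kolmogorov complexity with respect to `U`. -/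
noncomputable def plainC (U : List Bool × List Bool →. List Bool) (x : List Bool) : ℕ :=
  condC U x []

/-- `U` is a partial computable, additively optimal (universal) machine. -/
def AdditivelyOptimal (U : List Bool × List Bool →. List Bool) : Prop :=
  Partrec U ∧
    ∀ V : List Bool × List Bool →. List Bool, Partrec V →
      ∃ c : ℕ, ∀ y p x, x ∈ V (y, p) →
        ∃ q : List Bool, x ∈ U (y, q) ∧ q.length ≤ p.length + c

/-- The string of `n` zeros; `C(n)` is the complexity of this string. -/
def zeros (n : ℕ) : List Bool := List.replicate n false

/-- A natural number viewed as a binary string (for complexities like `C(C(x)|x)`). -/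
def natStr (k : ℕ) : List Bool := k.bits

/-- The `i`-th binary digit of a real number. -/
noncomputable def binDigit (α : ℝ) (i : ℕ) : Bool :=
  decide (⌊α * 2 ^ (i + 1)⌋ % 2 = 1)

/-- The string of the first `n` binary digits of a real number. -/
noncomputable def binPrefix (α : ℝ) (n : ℕ) : List Bool :=
  (List.range n).map (binDigit α)

/-- `q` is a computable nondecreasing rational sequence converging to `α ∈ [0,1]`;
this witnesses that `α` is a left c.e. real. -/
structure LeftCEApprox (α : ℝ) (q : ℕ → ℚ) : Prop where
  nonneg : 0 ≤ α
  le_one : α ≤ 1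
  comp : Computable q
  mono : Monotone q
  tendsto : Filter.Tendsto (fun n => (q n : ℝ)) Filter.atTop (nhds α)

/-- Partial recursiveness relative to an oracle `g` (relativized `Nat.Partrec`). -/
inductive RecursiveInOracle (g : ℕ →. ℕ) : (ℕ →. ℕ) → Prop
  | oracle : RecursiveInOracle g g
  | zero : RecursiveInOracle g (pure 0)
  | succ : RecursiveInOracle g ↑Nat.succ
  | left : RecursiveInOracle g ↑fun n : ℕ => (Nat.unpair n).1
  | right : RecursiveInOracle g ↑fun n : ℕ => (Nat.unpair n).2
  | pair {f h : ℕ →. ℕ} : RecursiveInOracle g f → RecursiveInOracle g h →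
      RecursiveInOracle g fun n => Nat.pair <$> f n <*> h n
  | comp {f h : ℕ →. ℕ} : RecursiveInOracle g f → RecursiveInOracle g h →
      RecursiveInOracle g fun n => h n >>= f
  | prec {f h : ℕ →. ℕ} : RecursiveInOracle g f → RecursiveInOracle g h →
      RecursiveInOracle g (Nat.unpaired fun a n =>
        n.rec (f a) fun y IH => do let i ← IH; h (Nat.pair a (Nat.pair y i)))
  | rfind {f : ℕ →. ℕ} : RecursiveInOracle g f →
      RecursiveInOracle g fun a => Nat.rfind fun n => (fun m => m = 0) <$> f (Nat.pair a n)

/-- The binary digit sequence of a real, as an oracle. -/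
noncomputable def digitOracle (α : ℝ) : ℕ →. ℕ :=
  fun n => Part.some (cond (binDigit α n) 1 0)

open Classical in
/-- The halting problem, as a (characteristic) function on codes of programs. -/
noncomputable def haltingFun : ℕ → ℕ := fun n =>
  if ((Denumerable.ofNat Nat.Partrec.Code n).eval n).Dom then 1 else 0

/-- The halting problem is Turing reducible to the binary digit sequence of `α`. -/
def TuringComplete (α : ℝ) : Prop :=
  RecursiveInOracle (digitOracle α) ↑haltingFun

section Main

open Nat.Partrec (Code)
open Nat.Partrec.Code Encodable

private def prog (k : ℕ) : List Bool := (Encodable.decode (α := List Bool) k).getD []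

private def inp (q : List Bool) : ℕ :=
  Encodable.encode ((([] : List Bool), q) : List Bool × List Bool)

private def stepOk (c : Code) (w : List Bool) (t k : ℕ) : Bool :=
  decide (evaln t c (inp (prog k)) = some (Encodable.encode w))

private def hit (c : Code) (w : List Bool) (m t : ℕ) : Bool :=
  (List.range (t + 1)).any fun k => (decide ((prog k).length = m)) && stepOk c w t k

private theorem hit_iff {c : Code} {w : List Bool} {m t : ℕ} :
    hit c w m t = true ↔
      ∃ k ≤ t, (prog k).length = m ∧ Encodable.encode w ∈ evaln t c (inp (prog k)) := by
  simp only [hit, List.any_eq_true, List.mem_range, Nat.lt_succ_iff, Bool.and_eq_true,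
    decide_eq_true_eq, stepOk, Option.mem_def]

private theorem bits_eq_cons (n : ℕ) (h : n ≠ 0) :
    n.bits = (decide (n % 2 = 1)) :: (n / 2).bits := by
  rcases Nat.even_or_odd n with ⟨k, hk⟩ | ⟨k, hk⟩
  · subst hk
    have hk0 : k ≠ 0 := by omega
    rw [show k + k = 2 * k by ring, Nat.bit0_bits _ hk0]
    have h1 : (2 * k) % 2 = 0 := by omega
    have h2 : (2 * k) / 2 = k := by omega
    simp [h1, h2]
  · subst hk
    rw [Nat.bit1_bits]
    have h1 : (2 * k + 1) % 2 = 1 := by omega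
    have h2 : (2 * k + 1) / 2 = k := by omega
    simp [h1, h2]

private theorem primrec_natStr : Primrec natStr := by
  have := Primrec.nat_strong_rec (fun (_ : Unit) n => natStr n)
    (g := fun (_ : Unit) (l : List (List Bool)) =>
      if l.length = 0 then some [] else
        some ((decide (l.length % 2 = 1)) :: (l.getD (l.length / 2) [])))
    ?hg ?H
  · exact this.comp (Primrec.const ()) Primrec.id
  case hg =>
    apply Primrec.ite
    · exact (Primrec.eq.comp (Primrec.list_length.comp Primrec.snd) (Primrec.const 0))
    · exact Primrec.option_some.comp (Primrec.const [])
    · refine Primrec.option_some.comp (Primrec.list_cons.comp ?_ ?_)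
      · exact PrimrecPred.decide (Primrec.eq.comp
          ((Primrec.nat_mod.comp (Primrec.list_length.comp Primrec.snd) (Primrec.const 2)))
          (Primrec.const 1))
      · exact (Primrec.list_getD []).comp (Primrec.snd)
          ((Primrec.nat_div.comp (Primrec.list_length.comp Primrec.snd) (Primrec.const 2)))
  case H =>
    intro _ n
    simp only [List.length_map, List.length_range]
    rcases Nat.eq_zero_or_pos n with h0 | hpos
    · simp [h0, natStr]
    · have hne : n ≠ 0 := by omega
      rw [if_neg hne]
      have hlt : n / 2 < n := Nat.div_lt_self hpos (by norm_num)
      have : ((List.range n).map natStr).getD (n / 2) [] = natStr (n / 2) := by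
        rw [List.getD_eq_getElem?_getD]
        simp [List.getElem?_map, List.getElem?_range hlt]
      rw [this, natStr, natStr, bits_eq_cons n hne]

private theorem primrec_prog : Primrec prog :=
  Primrec.option_getD.comp (Primrec.decode) (Primrec.const [])

private theorem primrec_inpProg : Primrec fun k => inp (prog k) :=
  Primrec.encode.comp ((Primrec.const ([] : List Bool)).pair primrec_prog)

private theorem primrec_hit (c : Code) :
    Primrec fun a : (List Bool × ℕ) × ℕ => hit c a.1.1 a.1.2 a.2 := by
  have hf : Primrec fun a : (List Bool × ℕ) × ℕ => List.range (a.2 + 1) :=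
    Primrec.list_range.comp (Primrec.succ.comp Primrec.snd)
  have hstep : Primrec fun p : ((List Bool × ℕ) × ℕ) × ℕ × Bool =>
      stepOk c p.1.1.1 p.1.2 p.2.1 := by
    unfold stepOk
    apply PrimrecPred.decide
    apply Primrec.eq.comp
    · exact primrec_evaln.comp
        (((Primrec.snd.comp Primrec.fst).pair (Primrec.const c)).pair
          (primrec_inpProg.comp (Primrec.fst.comp Primrec.snd)))
    · exact Primrec.option_some.comp
        (Primrec.encode.comp (Primrec.fst.comp (Primrec.fst.comp Primrec.fst)))
  have hlen : Primrec fun p : ((List Bool × ℕ) × ℕ) × ℕ × Bool =>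
      decide ((prog p.2.1).length = p.1.1.2) :=
    PrimrecPred.decide <| Primrec.eq.comp
      (Primrec.list_length.comp (primrec_prog.comp (Primrec.fst.comp Primrec.snd)))
      (Primrec.snd.comp (Primrec.fst.comp Primrec.fst))
  have hh : Primrec fun p : ((List Bool × ℕ) × ℕ) × ℕ × Bool =>
      ((decide ((prog p.2.1).length = p.1.1.2)) && stepOk c p.1.1.1 p.1.2 p.2.1) || p.2.2 := by
    have hband : Primrec fun p : ((List Bool × ℕ) × ℕ) × ℕ × Bool =>
        (decide ((prog p.2.1).length = p.1.1.2)) && stepOk c p.1.1.1 p.1.2 p.2.1 := by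
      have := Primrec.cond hlen hstep (Primrec.const false)
      exact this.of_eq fun p => by
        cases h : decide ((prog p.2.1).length = p.1.1.2) <;> simp [h]
    have := Primrec.cond hband (Primrec.const true) (Primrec.snd.comp Primrec.snd)
    exact this.of_eq fun p => by
      cases h : ((decide ((prog p.2.1).length = p.1.1.2)) && stepOk c p.1.1.1 p.1.2 p.2.1) <;>
        simp [h]
  have := Primrec.list_foldr hf (Primrec.const false) hh.to₂
  refine this.of_eq fun a => ?_
  show _ = hit c a.1.1 a.1.2 a.2
  unfold hit
  induction (List.range (a.2 + 1)) with
  | nil => rfl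
  | cons b l ih => simp [List.foldr, ih, List.any_cons]

private def Ffun (c : Code) : List Bool × ℕ × List Bool →. ℕ :=
  fun a => (Nat.rfind fun t => Part.some (hit c a.1 a.2.1 t)).bind
    fun t₀ => Nat.rfind fun m => Part.some (hit c a.2.2 m t₀)

private def Vfun (c : Code) : List Bool × List Bool →. List Bool :=
  fun a => (Nat.rfind fun s => Part.some (evaln s c (inp a.2)).isSome).bind
    fun t' => (Nat.rfind fun m => Part.some (hit c a.1 m t')).map natStr

private theorem partrec_Ffun (c : Code) : Partrec (Ffun c) := by
  apply Partrec.bind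
  · apply Partrec.rfind
    apply Computable₂.partrec₂
    apply Primrec₂.to_comp
    exact ((primrec_hit c).comp
      (((Primrec.fst.comp Primrec.fst).pair
        (Primrec.fst.comp (Primrec.snd.comp Primrec.fst))).pair Primrec.snd)).to₂
  · apply Partrec.rfind
    apply Computable₂.partrec₂
    apply Primrec₂.to_comp
    exact ((primrec_hit c).comp
      (((Primrec.snd.comp (Primrec.snd.comp (Primrec.fst.comp Primrec.fst))).pair
        Primrec.snd).pair (Primrec.snd.comp Primrec.fst))).to₂

private theorem partrec_Vfun (c : Code) : Partrec (Vfun c) := by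
  apply Partrec.bind
  · apply Partrec.rfind
    apply Computable₂.partrec₂
    apply Primrec₂.to_comp
    exact (Primrec.option_isSome.comp (primrec_evaln.comp
      ((Primrec.snd.pair (Primrec.const c)).pair
        ((Primrec.encode.comp ((Primrec.const ([] : List Bool)).pair
          (Primrec.snd.comp Primrec.fst))))))).to₂
  · apply Partrec.map
    · apply Partrec.rfind
      apply Computable₂.partrec₂
      apply Primrec₂.to_comp
      exact ((primrec_hit c).comp
        (((Primrec.fst.comp (Primrec.fst.comp Primrec.fst)).pair Primrec.snd).pair
          (Primrec.snd.comp Primrec.fst))).to₂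
    · exact (primrec_natStr.comp Primrec.snd).to_comp.to₂

section Spec

variable {U : List Bool × List Bool →. List Bool} {c : Code}
  (hc : eval c = fun n => Part.bind (Encodable.decode (α := List Bool × List Bool) n)
    fun a => (U a).map Encodable.encode)

include hc

private theorem eval_inp (q : List Bool) :
    eval c (inp q) = (U ([], q)).map Encodable.encode := by
  rw [hc]; simp [inp]

private theorem mem_U_iff {q w : List Bool} :
    Encodable.encode w ∈ eval c (inp q) ↔ w ∈ U ([], q) := by
  rw [eval_inp hc, Part.mem_map_iff]
  constructor
  · rintro ⟨w', hw', hww⟩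
    rwa [← Encodable.encode_injective hww]
  · intro h; exact ⟨w, h, rfl⟩

private theorem of_hit {w : List Bool} {m t : ℕ} (h : hit c w m t = true) :
    ∃ q : List Bool, q.length = m ∧ w ∈ U ([], q) := by
  obtain ⟨k, -, hlen, hev⟩ := hit_iff.1 h
  exact ⟨prog k, hlen, (mem_U_iff hc).1 (evaln_sound hev)⟩

private theorem exists_halt {q w : List Bool} (h : w ∈ U ([], q)) :
    ∃ t, Encodable.encode q ≤ t ∧ Encodable.encode w ∈ evaln t c (inp q) := by
  obtain ⟨t, ht⟩ := evaln_complete.1 ((mem_U_iff hc).2 h)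
  refine ⟨t, ?_, ht⟩
  calc Encodable.encode q ≤ inp q := by
        rw [inp, Encodable.encode_prod_val]; exact Nat.right_le_pair _ _
    _ ≤ t := le_of_lt (evaln_bound ht)

omit hc in
private theorem hit_of_prog {q w : List Bool} {t : ℕ} (hk : Encodable.encode q ≤ t)
    (hev : Encodable.encode w ∈ evaln t c (inp q)) : hit c w q.length t = true := by
  refine hit_iff.2 ⟨Encodable.encode q, hk, ?_, ?_⟩ <;> simp [prog, Encodable.encodek, hev]

end Spec

private theorem exists_program (U : List Bool × List Bool →. List Bool)
    (hU : AdditivelyOptimal U) (w : List Bool) : ∃ q : List Bool, w ∈ U ([], q) := by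
  obtain ⟨c0, hc0⟩ := hU.2 (fun _ => Part.some w) (Partrec.const' _)
  obtain ⟨q, hq, -⟩ := hc0 [] [] w (Part.mem_some w)
  exact ⟨q, hq⟩

private theorem plainC_spec (U : List Bool × List Bool →. List Bool)
    (hU : AdditivelyOptimal U) (w : List Bool) :
    ∃ q : List Bool, q.length = plainC U w ∧ w ∈ U ([], q) := by
  have hne : {k : ℕ | ∃ p : List Bool, p.length = k ∧ w ∈ U ([], p)}.Nonempty := by
    obtain ⟨q, hq⟩ := exists_program U hU w
    exact ⟨q.length, q, rfl, hq⟩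
  exact Nat.sInf_mem hne

private theorem plainC_le (U : List Bool × List Bool →. List Bool) {q w : List Bool}
    (h : w ∈ U ([], q)) : plainC U w ≤ q.length :=
  Nat.sInf_le ⟨q, rfl, h⟩

end Main


/-- Proposition: there is a constant `d` and a partial computable `F` such that for all
strings `x, y` with `C(y) < C(C(x)|x) - d`, `F(x, C(x), y)` is defined and equals
`C(y)`. -/
theorem pair_with_complexity_computes_complexities
    (U : List Bool × List Bool →. List Bool) (hU : AdditivelyOptimal U) :
    ∃ (d : ℕ) (F : List Bool × ℕ × List Bool →. ℕ), Partrec F ∧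
      ∀ x y : List Bool,
        plainC U y + d < condC U (natStr (plainC U x)) x →
          plainC U y ∈ F (x, plainC U x, y) := by
  classical
  obtain ⟨c, hc⟩ := Nat.Partrec.Code.exists_code.1 hU.1
  obtain ⟨d, hd⟩ := hU.2 (Vfun c) (partrec_Vfun c)
  refine ⟨d, Ffun c, partrec_Ffun c, ?_⟩
  intro x y hyp
  set n := plainC U x with hn
  -- a shortest program for x and a time bound for it
  obtain ⟨p, hp_len, hp_mem⟩ := plainC_spec U hU x
  obtain ⟨s, hs1, hs2⟩ := exists_halt hc hp_mem
  have hhit_s : hit c x n s = true := by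
    have h0 := hit_of_prog (c := c) hs1 hs2
    rwa [hp_len] at h0
  -- the first search of F converges, to some minimal t₀
  have hdom : (Nat.rfind fun t => Part.some (hit c x n t)).Dom :=
    Nat.rfind_dom.2 ⟨s, Part.mem_some_iff.2 hhit_s.symm, fun _ => trivial⟩
  obtain ⟨t₀, ht₀⟩ := Part.dom_iff_mem.1 hdom
  have ht₀prop : hit c x n t₀ = true :=
    (Part.mem_some_iff.1 (Nat.rfind_spec ht₀)).symm
  -- a shortest program for y
  obtain ⟨q, hq_len, hq_mem⟩ := plainC_spec U hU y
  by_cases hcap : Encodable.encode q ≤ t₀ ∧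
      Encodable.encode y ∈ Nat.Partrec.Code.evaln t₀ c (inp q)
  · -- the shortest program for y halts within time t₀ : F computes C(y)
    have hhy : hit c y (plainC U y) t₀ = true := by
      rw [← hq_len]; exact hit_of_prog hcap.1 hcap.2
    refine Part.mem_bind_iff.2 ⟨t₀, ht₀, ?_⟩
    refine Nat.mem_rfind.2 ⟨Part.mem_some_iff.2 hhy.symm, ?_⟩
    intro m hm
    have hfalse : hit c y m t₀ = false := by
      rcases Bool.eq_false_or_eq_true (hit c y m t₀) with h | h
      · exfalso
        obtain ⟨q', hq'l, hq'm⟩ := of_hit hc h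
        have := plainC_le U hq'm
        omega
      · exact h
    exact Part.mem_some_iff.2 hfalse.symm
  · -- otherwise C(C(x)|x) ≤ C(y) + d, contradicting the hypothesis
    exfalso
    -- the first search of V on (x, q) converges to some t'
    obtain ⟨s₁, hs₁a, hs₁b⟩ := exists_halt hc hq_mem
    have hdomV : (Nat.rfind fun s => Part.some (Nat.Partrec.Code.evaln s c (inp q)).isSome).Dom := by
      refine Nat.rfind_dom.2 ⟨s₁, Part.mem_some_iff.2 ?_, fun _ => trivial⟩
      exact (Option.isSome_iff_exists.2 ⟨_, hs₁b⟩).symm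
    obtain ⟨t', ht'⟩ := Part.dom_iff_mem.1 hdomV
    have ht'some : (Nat.Partrec.Code.evaln t' c (inp q)).isSome :=
      (Part.mem_some_iff.1 (Nat.rfind_spec ht')).symm
    obtain ⟨v, hv⟩ := Option.isSome_iff_exists.1 ht'some
    have hvmem : v ∈ Nat.Partrec.Code.evaln t' c (inp q) := hv
    have hveq : v = Encodable.encode y :=
      Part.mem_unique (Nat.Partrec.Code.evaln_sound hvmem) ((mem_U_iff hc).2 hq_mem)
    subst hveq
    have ht'q : Encodable.encode q ≤ t' := by
      have h1 : inp q < t' := Nat.Partrec.Code.evaln_bound hvmem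
      have h2 : Encodable.encode q ≤ inp q := by
        rw [inp, Encodable.encode_prod_val]; exact Nat.right_le_pair _ _
      omega
    -- t₀ ≤ t'
    have ht₀t' : t₀ ≤ t' := by
      by_contra h
      push_neg at h
      exact hcap ⟨le_trans ht'q (le_of_lt h),
        Nat.Partrec.Code.evaln_mono (le_of_lt h) hvmem⟩
    -- so some length-n program for x halts within t'
    have hhitx' : hit c x n t' = true := by
      obtain ⟨k, hk, hlen, hev⟩ := hit_iff.1 ht₀prop
      exact hit_iff.2 ⟨k, le_trans hk ht₀t', hlen, Nat.Partrec.Code.evaln_mono ht₀t' hev⟩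
    -- hence V(x,q) outputs natStr n
    have hVmem : natStr n ∈ Vfun c (x, q) := by
      refine Part.mem_bind_iff.2 ⟨t', ht', ?_⟩
      refine (Part.mem_map_iff _).2 ⟨n, ?_, rfl⟩
      refine Nat.mem_rfind.2 ⟨Part.mem_some_iff.2 hhitx'.symm, ?_⟩
      intro m hm
      have hfalse : hit c x m t' = false := by
        rcases Bool.eq_false_or_eq_true (hit c x m t') with h | h
        · exfalso
          obtain ⟨q', hq'l, hq'm⟩ := of_hit hc h
          have := plainC_le U hq'm
          omega
        · exact h
      exact Part.mem_some_iff.2 hfalse.symm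
    obtain ⟨q', hq'U, hq'len⟩ := hd x q (natStr n) hVmem
    have hle : condC U (natStr n) x ≤ q'.length := Nat.sInf_le ⟨q', rfl, hq'U⟩
    omega
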